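/- For every integer p, the family indexed by q ∈ ℤ⁴ given by q ↦ (1/2)·(1/A_p(q) + 1/A_p(−q)) − 1/A_0(q) + 2p²/A_0(q)² − 4p²·S(q)²/A_0(q)³ is summable. (After the symmetrization q ↦ −q and the subtraction of the mass counterterm 1/A_0(q) and of the wave-function counterterms 2p²/A_0(q)² and 4p²S(q)²/A_0(q)³, the one-loop melonic self-energy is ultraviolet finite; this is the one-loop content of the renormalized two-point closed equation with renormalization conditions at zero momentum.) -/

import Mathlib

open scoped BigOperators

/-- The gauge-constrained propagator denominator: `A m p q = |q⃗|² + m²` for a momentum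
`q⃗ ∈ ℤ⁶` with one component fixed to `p`, four free components `q`, and the last component
`-(p + S q)` determined by the closure constraint. -/
noncomputable def A (m : ℝ) (p : ℤ) (q : Fin 4 → ℤ) : ℝ :=
  (p : ℝ) ^ 2 + (∑ i, ((q i : ℝ)) ^ 2) + ((p : ℝ) + ∑ i, (q i : ℝ)) ^ 2 + m ^ 2

/-! ### Auxiliary lemmas -/

lemma aux_summable_h : Summable (fun k : ℤ => ((k : ℝ) ^ 2 + 1) ^ (-(3/4 : ℝ))) := by
  have hnat : Summable (fun n : ℕ => ((n : ℝ) ^ 2 + 1) ^ (-(3/4 : ℝ))) := by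
    apply Summable.of_norm_bounded_eventually_nat (g := fun n => (n : ℝ) ^ (-(3/2 : ℝ)))
      (Real.summable_nat_rpow.mpr (by norm_num))
    filter_upwards [Filter.eventually_gt_atTop 0] with n hn
    have h1 : (0:ℝ) < (n:ℝ) ^ 2 := by positivity
    have h2 : (n:ℝ) ^ 2 ≤ (n:ℝ) ^ 2 + 1 := by linarith
    have h3 := Real.rpow_le_rpow_of_nonpos h1 h2 (by norm_num : -(3/4 : ℝ) ≤ 0)
    rw [Real.norm_of_nonneg (by positivity)]
    refine h3.trans_eq ?_
    rw [← Real.rpow_natCast (n:ℝ) 2, ← Real.rpow_mul (by positivity)]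
    norm_num
  apply Summable.of_nat_of_neg
  · exact hnat.congr fun n => by push_cast; ring_nf
  · exact hnat.congr fun n => by push_cast; ring_nf

lemma aux_summable_pi_prod {n : ℕ} {h : ℤ → ℝ} (h0 : ∀ k, 0 ≤ h k) (hs : Summable h) :
    Summable (fun q : Fin n → ℤ => ∏ i, h (q i)) := by
  induction n with
  | zero =>
      haveI : Finite (Fin 0 → ℤ) := Finite.of_subsingleton
      exact Summable.of_finite
  | succ n ih =>
      have hF : Summable (fun x : ℤ × (Fin n → ℤ) => h x.1 * ∏ i, h (x.2 i)) := by
        apply Summable.mul_of_nonneg hs ih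
        · exact fun k => h0 k
        · exact fun y => Finset.prod_nonneg fun i _ => h0 _
      have := ((Fin.consEquiv (fun _ => ℤ)).symm.summable_iff
        (f := fun x : ℤ × (Fin n → ℤ) => h x.1 * ∏ i, h (x.2 i))).mpr hF
      refine this.congr fun q => ?_
      simp only [Function.comp_apply, Fin.consEquiv_symm_apply, Fin.prod_univ_succ]
      rfl

set_option maxHeartbeats 1000000 in
lemma aux_melon_id (a u v : ℝ) (ha : a ≠ 0) (hP : a + 2*u + v ≠ 0) (hQ : a - 2*u + v ≠ 0) :
    (1/2)*(1/(a+2*u+v) + 1/(a-2*u+v)) - 1/a + v/a^2 - (4*u^2)/a^3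
    = (a^2*v^2 + a*v^3 - 12*a*v*u^2 - 4*v^2*u^2 + 16*u^4) / (a^3*((a+2*u+v)*(a-2*u+v))) := by
  field_simp
  ring

set_option maxHeartbeats 1000000 in
lemma aux_key_bound (m p s a P Q : ℝ) (hm : 0 < m) (hma : m^2 ≤ a) (hsa : s^2 ≤ a)
    (hP5 : a ≤ 5*P) (hQ5 : a ≤ 5*Q) (hP0 : 0 < P) (hQ0 : 0 < Q)
    (hPa : P = a + 2*(p*s) + 2*p^2) (hQa : Q = a - 2*(p*s) + 2*p^2) :
    |(1/2)*(1/P + 1/Q) - 1/a + 2*p^2/a^2 - 4*p^2*s^2/a^3|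
      ≤ (1100*p^4*m^2 + 600*p^6) / (m^2*a^3) := by
  have hm2 : 0 < m^2 := by positivity
  have ha : 0 < a := lt_of_lt_of_le hm2 hma
  have hid := aux_melon_id a (p*s) (2*p^2) ha.ne' (hPa ▸ hP0.ne') (hQa ▸ hQ0.ne')
  rw [show (4:ℝ)*p^2*s^2/a^3 = 4*(p*s)^2/a^3 by ring, hPa, hQa, hid]
  rw [← hPa, ← hQa]
  set u : ℝ := p*s with hu
  set v : ℝ := 2*p^2 with hv
  set N : ℝ := a^2*v^2 + a*v^3 - 12*a*v*u^2 - 4*v^2*u^2 + 16*u^4 with hN_def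
  rw [abs_div, abs_of_pos (by positivity : (0:ℝ) < a^3*(P*Q))]
  rw [div_le_div_iff₀ (by positivity) (by positivity)]
  have hu2 : u^2 = p^2*s^2 := by rw [hu]; ring
  have hu4 : u^4 = p^4*s^4 := by rw [hu]; ring
  have hNb : m^2 * |N| ≤ (44*p^4*m^2 + 24*p^6) * a^2 := by
    rcases abs_cases N with ⟨hN, _⟩ | ⟨hN, _⟩ <;> rw [hN] <;> simp only [hN_def, hu2, hu4, hv] <;>
      nlinarith [mul_nonneg (mul_nonneg (sub_nonneg.2 hma) ha.le) (pow_nonneg (sq_nonneg p) 3),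
        mul_nonneg (mul_nonneg (mul_nonneg (pow_nonneg (sq_nonneg p) 2) (sq_nonneg s)) ha.le) hm2.le,
        mul_nonneg (mul_nonneg (pow_nonneg (sq_nonneg p) 3) (sq_nonneg s)) hm2.le,
        mul_nonneg (mul_nonneg (mul_nonneg (sub_nonneg.2 hsa) (by nlinarith [sq_nonneg s] : (0:ℝ) ≤ a + s^2)) (pow_nonneg (sq_nonneg p) 2)) hm2.le,
        mul_nonneg (mul_nonneg (mul_nonneg (sub_nonneg.2 hsa) ha.le) (pow_nonneg (sq_nonneg p) 2)) hm2.le,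
        mul_nonneg (mul_nonneg (sub_nonneg.2 hsa) hm2.le) (pow_nonneg (sq_nonneg p) 3),
        sq_nonneg p, sq_nonneg s, ha.le, hm2.le]
  have hPQ : a^2 ≤ 25*(P*Q) := by
    nlinarith [mul_le_mul hP5 hQ5 ha.le (by linarith : (0:ℝ) ≤ 5*P)]
  have e1 : m^2*|N| * a^3 ≤ (44*p^4*m^2 + 24*p^6)*a^2*a^3 :=
    mul_le_mul_of_nonneg_right hNb (by positivity)
  have e2 : (44*p^4*m^2 + 24*p^6)*a^3*a^2 ≤ (44*p^4*m^2 + 24*p^6)*a^3*(25*(P*Q)) :=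
    mul_le_mul_of_nonneg_left hPQ (by positivity)
  nlinarith [e1, e2]

lemma aux_A_pos (m : ℝ) (hm : 0 < m) (p : ℤ) (q : Fin 4 → ℤ) : 0 < A m p q := by
  unfold A
  have h1 : (0:ℝ) ≤ ∑ i, ((q i : ℝ))^2 := Finset.sum_nonneg fun i _ => sq_nonneg _
  nlinarith [sq_nonneg ((p:ℝ)), sq_nonneg ((p:ℝ) + ∑ i, (q i:ℝ))]

lemma aux_stepB (m : ℝ) (hm : 0 < m) (q : Fin 4 → ℤ) :
    1/(A m 0 q)^3 ≤ (1/(min 1 (m^2))^3) * ∏ i, (((q i : ℝ))^2 + 1) ^ (-(3/4 : ℝ)) := by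
  set μ := min 1 (m^2) with hμdef
  have hμ : 0 < μ := lt_min one_pos (by positivity)
  have hμ1 : μ ≤ 1 := min_le_left _ _
  have hμm : μ ≤ m^2 := min_le_right _ _
  have htt : ∀ i, ((q i:ℝ))^2 ≤ ∑ j, ((q j:ℝ))^2 :=
    fun i => Finset.single_le_sum (f := fun j => ((q j:ℝ))^2) (fun j _ => sq_nonneg _) (Finset.mem_univ i)
  have ha0 : 0 < A m 0 q := aux_A_pos m hm 0 q
  have h2 : A m 0 q = (∑ j, ((q j:ℝ))^2) + (∑ j, (q j:ℝ))^2 + m^2 := by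
    simp [A]
  have hfac : ∀ i, ((q i:ℝ))^2 + 1 ≤ A m 0 q / μ := by
    intro i
    rw [le_div_iff₀ hμ]
    nlinarith [htt i, sq_nonneg (∑ j, (q j:ℝ)), sq_nonneg ((q i:ℝ))]
  have hprod : ∏ i, (((q i:ℝ))^2 + 1) ≤ (A m 0 q / μ)^4 := by
    have h := Finset.prod_le_prod (s := Finset.univ)
      (f := fun i : Fin 4 => ((q i:ℝ))^2+1) (g := fun _ => A m 0 q / μ)
      (fun i _ => by positivity) (fun i _ => hfac i)
    simpa [Finset.prod_const, div_pow] using h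
  have hprodpos : 0 < ∏ i, (((q i:ℝ))^2 + 1) := Finset.prod_pos fun i _ => by positivity
  have hk := Real.rpow_le_rpow_of_nonpos hprodpos hprod (by norm_num : -(3/4:ℝ) ≤ 0)
  have hre : ∏ i, (((q i:ℝ))^2 + 1) ^ (-(3/4:ℝ)) = (∏ i, (((q i:ℝ))^2 + 1)) ^ (-(3/4:ℝ)) :=
    Real.finset_prod_rpow _ _ (fun i _ => by positivity) _
  have hAμ : 0 < A m 0 q / μ := by positivity
  have hl : ((A m 0 q / μ)^(4:ℕ)) ^ (-(3/4:ℝ)) = μ^3 / (A m 0 q)^3 := by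
    rw [← Real.rpow_natCast (A m 0 q / μ) 4, ← Real.rpow_mul hAμ.le]
    rw [show ((4:ℕ):ℝ) * (-(3/4:ℝ)) = -((3:ℕ):ℝ) by norm_num]
    rw [Real.rpow_neg hAμ.le, Real.rpow_natCast, div_pow, inv_div]
  calc 1/(A m 0 q)^3 = (1/μ^3) * (μ^3/(A m 0 q)^3) := by
        field_simp
    _ ≤ (1/μ^3) * ∏ i, (((q i:ℝ))^2 + 1) ^ (-(3/4:ℝ)) := by
        apply mul_le_mul_of_nonneg_left _ (by positivity)
        rw [hre, ← hl]
        exact hk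

/-- After the symmetrization `q ↦ -q` and subtraction of the mass counterterm `1/A₀(q)` and
wave-function counterterms `2p²/A₀(q)²` and `4p²S(q)²/A₀(q)³`, the one-loop melonic
self-energy is UV finite. -/
theorem renormalized_self_energy_summable (m : ℝ) (hm : 0 < m) (p : ℤ) :
    Summable (fun q : Fin 4 → ℤ =>
      (1 / 2) * (1 / A m p q + 1 / A m p (-q)) - 1 / A m 0 q
        + 2 * (p : ℝ) ^ 2 / (A m 0 q) ^ 2
        - 4 * (p : ℝ) ^ 2 * (∑ i, (q i : ℝ)) ^ 2 / (A m 0 q) ^ 3) := by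
  have hm2 : 0 < m^2 := by positivity
  set C0 : ℝ := (1100*(p:ℝ)^4*m^2 + 600*(p:ℝ)^6) with hC0
  have hC0' : 0 ≤ C0 := by positivity
  apply Summable.of_norm_bounded (g := fun q : Fin 4 → ℤ =>
    (C0/m^2) * ((1/(min 1 (m^2))^3) * ∏ i, (((q i : ℝ))^2 + 1) ^ (-(3/4 : ℝ))))
  · exact ((aux_summable_pi_prod (fun k => Real.rpow_nonneg (by positivity) _)
      aux_summable_h).mul_left _).mul_left _
  · intro q
    set s : ℝ := ∑ i, (q i : ℝ) with hs_def
    set t : ℝ := ∑ i, ((q i : ℝ))^2 with ht_def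
    have hs4 : s^2 ≤ 4*t := by
      simp only [hs_def, ht_def, Fin.sum_univ_four]
      nlinarith [sq_nonneg ((q 0:ℝ)-(q 1:ℝ)), sq_nonneg ((q 0:ℝ)-(q 2:ℝ)),
        sq_nonneg ((q 0:ℝ)-(q 3:ℝ)), sq_nonneg ((q 1:ℝ)-(q 2:ℝ)),
        sq_nonneg ((q 1:ℝ)-(q 3:ℝ)), sq_nonneg ((q 2:ℝ)-(q 3:ℝ))]
    have ht0 : (0:ℝ) ≤ t := Finset.sum_nonneg fun i _ => sq_nonneg _
    have ha_eq : A m 0 q = t + s^2 + m^2 := by simp [A]; rfl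
    have hP_raw : A m p q = (p:ℝ)^2 + t + ((p:ℝ) + s)^2 + m^2 := rfl
    have hneg1 : ∑ i, (((-q) i : ℝ))^2 = t := by
      simp [ht_def, Pi.neg_apply]
    have hneg2 : ∑ i, (((-q) i : ℝ)) = -s := by
      simp [hs_def, Pi.neg_apply, Finset.sum_neg_distrib]
    have hQ_raw : A m p (-q) = (p:ℝ)^2 + t + ((p:ℝ) + -s)^2 + m^2 := by
      unfold A; rw [hneg1, hneg2]
    have hma : m^2 ≤ A m 0 q := by rw [ha_eq]; nlinarith [sq_nonneg s]
    have hsa : s^2 ≤ A m 0 q := by rw [ha_eq]; nlinarith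
    have hP5 : A m 0 q ≤ 5 * A m p q := by
      rw [hP_raw, ha_eq]; nlinarith [sq_nonneg ((p:ℝ)+s), sq_nonneg (p:ℝ), sq_nonneg m]
    have hQ5 : A m 0 q ≤ 5 * A m p (-q) := by
      rw [hQ_raw, ha_eq]; nlinarith [sq_nonneg ((p:ℝ)+-s), sq_nonneg (p:ℝ), sq_nonneg m]
    have hPa : A m p q = A m 0 q + 2*((p:ℝ)*s) + 2*(p:ℝ)^2 := by
      rw [hP_raw, ha_eq]; ring
    have hQa : A m p (-q) = A m 0 q - 2*((p:ℝ)*s) + 2*(p:ℝ)^2 := by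
      rw [hQ_raw, ha_eq]; ring
    have hkey := aux_key_bound m (p:ℝ) s (A m 0 q) (A m p q) (A m p (-q)) hm hma hsa
      hP5 hQ5 (aux_A_pos m hm p q) (aux_A_pos m hm p (-q)) hPa hQa
    rw [Real.norm_eq_abs]
    calc |(1 / 2) * (1 / A m p q + 1 / A m p (-q)) - 1 / A m 0 q
        + 2 * (p : ℝ) ^ 2 / (A m 0 q) ^ 2 - 4 * (p : ℝ) ^ 2 * s ^ 2 / (A m 0 q) ^ 3|
        ≤ C0 / (m^2*(A m 0 q)^3) := hkey
      _ = (C0/m^2) * (1/(A m 0 q)^3) := by ring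
      _ ≤ (C0/m^2) * ((1/(min 1 (m^2))^3) * ∏ i, (((q i : ℝ))^2 + 1) ^ (-(3/4 : ℝ))) :=
          mul_le_mul_of_nonneg_left (aux_stepB m hm q) (by positivity)
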